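/- If φ is a skeleton (in the abstract sense) on a justified AJM game A, then φ• = { t | ∃ s ∈ φ, s ≈_A t } is a strategy on A, and φ is a skeleton of the strategy φ•. -/
import Mathlib


/- Justified AJM games, after Abramsky's game semantics for access control. -/

namespace AJM

inductive Pol where
  | P
  | O
deriving DecidableEq

inductive QA where
  | Q
  | Ans
deriving DecidableEq

def Pol.flip : Pol → Pol
  | .P => .O
  | .O => .P

/-- Well-bracketed strings over moves (condition (p4)). -/
inductive WB {M : Type} (lab : M → Pol × QA) (just : M → Option M) : List M → Prop
  | nil : WB lab just []
  | wrap (a q : M) (u : List M) : (lab a).2 = QA.Ans → just a = some q →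
      WB lab just u → WB lab just (q :: (u ++ [a]))
  | append (u v : List M) : WB lab just u → WB lab just v → WB lab just (u ++ v)

/-- Conditions (p1)–(p5): Opponent starts, alternation, linearity,
well-bracketing, justifiers occur before their moves. -/
def ValidSeq {M : Type} (lab : M → Pol × QA) (just : M → Option M) (s : List M) : Prop :=
  (∀ m, s.head? = some m → (lab m).1 = Pol.O) ∧
  List.Chain' (fun m m' => (lab m).1 ≠ (lab m').1) s ∧
  s.Nodup ∧
  (∃ t, s <+: t ∧ WB lab just t) ∧
  (∀ s₁ m s₂, s = s₁ ++ m :: s₂ → ∀ m', just m = some m' → m' ∈ s₁)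

/-- A justified AJM game (the data). -/
structure Game where
  M : Type
  lab : M → Pol × QA
  just : M → Option M
  pos : Set (List M)
  equiv : List M → List M → Prop

namespace Game

/-- The axioms making the data of a `Game` an actual justified AJM game. -/
structure Valid (A : Game) : Prop where
  just_wf : WellFounded fun m m' : A.M => A.just m' = some m
  just_pol : ∀ m m', A.just m = some m' → (A.lab m).1 ≠ (A.lab m').1
  just_qa : ∀ m m', A.just m = some m' → (A.lab m).2 = QA.Ans → (A.lab m').2 = QA.Q
  ans_justified : ∀ m, (A.lab m).2 = QA.Ans → A.just m ≠ none
  pos_nonempty : A.pos.Nonempty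
  pos_prefix_closed : ∀ s t : List A.M, s <+: t → t ∈ A.pos → s ∈ A.pos
  pos_valid : ∀ s ∈ A.pos, ValidSeq A.lab A.just s
  equiv_mem : ∀ s t, A.equiv s t → s ∈ A.pos ∧ t ∈ A.pos
  equiv_refl : ∀ s ∈ A.pos, A.equiv s s
  equiv_symm : ∀ s t, A.equiv s t → A.equiv t s
  equiv_trans : ∀ s t u, A.equiv s t → A.equiv t u → A.equiv s u
  equiv_lab : ∀ s t, A.equiv s t → s.map A.lab = t.map A.lab
  equiv_prefix : ∀ s t s' t', A.equiv s t → s' <+: s → t' <+: t →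
      s'.length = t'.length → A.equiv s' t'
  equiv_ext : ∀ s t a, A.equiv s t → s ++ [a] ∈ A.pos → ∃ b, A.equiv (s ++ [a]) (t ++ [b])

/-- A strategy on a game: a non-empty set of even-length positions that is
causally consistent, representation independent and deterministic. -/
structure IsStrategy (A : Game) (σ : Set (List A.M)) : Prop where
  subset_pos : σ ⊆ A.pos
  even_length : ∀ s ∈ σ, Even s.length
  nonempty : σ.Nonempty
  causal : ∀ s a b, s ++ [a, b] ∈ σ → s ∈ σ
  repind : ∀ s t, s ∈ σ → A.equiv s t → t ∈ σ
  det : ∀ s t a b a' b', s ++ [a, b] ∈ σ → t ++ [a', b'] ∈ σ →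
      A.equiv (s ++ [a]) (t ++ [a']) → A.equiv (s ++ [a, b]) (t ++ [a', b'])

/-- A skeleton of a strategy `σ`: a non-empty, causally consistent subset of
`σ` satisfying Uniformization. -/
structure IsSkeletonOf (A : Game) (φ σ : Set (List A.M)) : Prop where
  nonempty : φ.Nonempty
  subset : φ ⊆ σ
  causal : ∀ s a b, s ++ [a, b] ∈ φ → s ∈ φ
  uniformization : ∀ s a b, s ++ [a, b] ∈ σ → s ∈ φ → ∃! b', s ++ [a, b'] ∈ φ

/-- A skeleton in the abstract sense (independently of any strategy):
a non-empty, causally consistent set of even-length positions satisfying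
Functional Determinacy and Functional Representation Independence. -/
structure IsSkeleton (A : Game) (φ : Set (List A.M)) : Prop where
  subset_pos : φ ⊆ A.pos
  even_length : ∀ s ∈ φ, Even s.length
  nonempty : φ.Nonempty
  causal : ∀ s a b, s ++ [a, b] ∈ φ → s ∈ φ
  funDet : ∀ s a b c, s ++ [a, b] ∈ φ → s ++ [a, c] ∈ φ → b = c
  funRepInd : ∀ s t a b a', s ++ [a, b] ∈ φ → t ∈ φ →
      A.equiv (s ++ [a]) (t ++ [a']) →
      ∃! b', t ++ [a', b'] ∈ φ ∧ A.equiv (s ++ [a, b]) (t ++ [a', b'])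

/-- `φ• = { t | ∃ s ∈ φ, s ≈_A t }`, the saturation of `φ` under `≈_A`. -/
def dot (A : Game) (φ : Set (List A.M)) : Set (List A.M) :=
  {t | ∃ s ∈ φ, A.equiv s t}

/-- The preorder `φ ⊑ ψ` on skeletons. -/
def Subeq (A : Game) (φ ψ : Set (List A.M)) : Prop :=
  ∀ s a b s' a', s ++ [a, b] ∈ φ → s' ∈ ψ → A.equiv (s ++ [a]) (s' ++ [a']) →
    ∃ b', s' ++ [a', b'] ∈ ψ ∧ A.equiv (s ++ [a, b]) (s' ++ [a', b'])

end Game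

end AJM

open AJM Game

lemma AJM.equiv_length {A : Game} (hA : A.Valid) {s t : List A.M}
    (h : A.equiv s t) : s.length = t.length := by
  have := hA.equiv_lab s t h
  simpa using congrArg List.length this

lemma AJM.equiv_decomp {A : Game} (hA : A.Valid) {u w : List A.M} {x y : A.M}
    (h : A.equiv u (w ++ [x, y])) :
    ∃ u0 c d, u = u0 ++ [c, d] ∧ A.equiv u0 w ∧
      A.equiv (u0 ++ [c]) (w ++ [x]) := by
  have hlen : u.length = w.length + 2 := by
    simpa using AJM.equiv_length hA h
  have hle : w.length ≤ u.length := by omega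
  have hd : (u.drop w.length).length = 2 := by simp [hlen]
  obtain ⟨c, d, hcd⟩ := List.length_eq_two.mp hd
  have hu : u = u.take w.length ++ [c, d] := by
    conv_lhs => rw [← List.take_append_drop w.length u]
    rw [hcd]
  have hlen0 : (u.take w.length).length = w.length := by
    simp [hle]
  refine ⟨u.take w.length, c, d, hu, ?_, ?_⟩
  · exact hA.equiv_prefix u (w ++ [x, y]) _ w h
      ⟨[c, d], hu.symm⟩ ⟨[x, y], rfl⟩ (by simp [hlen0])
  · refine hA.equiv_prefix u (w ++ [x, y]) _ (w ++ [x]) h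
      ⟨[d], ?_⟩ ⟨[y], by simp⟩ (by simp [hlen0])
    rw [hu]; simp [List.take_left' hlen0]

open AJM Game in
/-- If `φ` is a skeleton (in the abstract sense), then `φ•` is a strategy,
and `φ` is a skeleton of `φ•`. -/
theorem dot_of_skeleton_is_strategy (A : Game) (hA : A.Valid)
    (φ : Set (List A.M)) (hφ : IsSkeleton A φ) :
    IsStrategy A (dot A φ) ∧ IsSkeletonOf A φ (dot A φ) := by
  have hsub : φ ⊆ dot A φ := by
    intro s hs
    exact ⟨s, hs, hA.equiv_refl s (hφ.subset_pos hs)⟩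
  constructor
  · constructor
    · rintro t ⟨s, hs, hst⟩
      exact (hA.equiv_mem s t hst).2
    · rintro t ⟨s, hs, hst⟩
      have := AJM.equiv_length hA hst
      rw [← this]
      exact hφ.even_length s hs
    · obtain ⟨s, hs⟩ := hφ.nonempty
      exact ⟨s, hsub hs⟩
    · rintro t a b ⟨u, hu, hut⟩
      obtain ⟨u0, c, d, hdecomp, h1, h2⟩ := AJM.equiv_decomp hA hut
      subst hdecomp
      exact ⟨u0, hφ.causal u0 c d hu, h1⟩
    · rintro s t ⟨u, hu, hus⟩ hst
      exact ⟨u, hu, hA.equiv_trans u s t hus hst⟩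
    · rintro s t a b a' b' ⟨u, hu, hus⟩ ⟨v, hv, hvt⟩ hst
      obtain ⟨u0, c, d, hud, hu1, hu2⟩ := AJM.equiv_decomp hA hus
      obtain ⟨v0, c', d', hvd, hv1, hv2⟩ := AJM.equiv_decomp hA hvt
      subst hud; subst hvd
      -- u0 ++ [c] ≈ v0 ++ [c']
      have hcc : A.equiv (u0 ++ [c]) (v0 ++ [c']) :=
        hA.equiv_trans _ _ _ hu2 (hA.equiv_trans _ _ _ hst
          (hA.equiv_symm _ _ hv2))
      have hv0 : v0 ∈ φ := hφ.causal v0 c' d' hv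
      obtain ⟨b'', ⟨hb1, hb2⟩, _⟩ := hφ.funRepInd u0 v0 c d c' hu hv0 hcc
      have : b'' = d' := hφ.funDet v0 c' b'' d' hb1 hv
      subst this
      exact hA.equiv_trans _ _ _ (hA.equiv_symm _ _ hus)
        (hA.equiv_trans _ _ _ hb2 hvt)
  · constructor
    · exact hφ.nonempty
    · exact hsub
    · exact hφ.causal
    · rintro s a b ⟨u, hu, hus⟩ hsφ
      obtain ⟨u0, c, d, hud, hu1, hu2⟩ := AJM.equiv_decomp hA hus
      subst hud
      obtain ⟨b', ⟨hb1, _⟩, _⟩ := hφ.funRepInd u0 s c d a hu hsφ hu2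
      exact ⟨b', hb1, fun y hy => hφ.funDet s a y b' hy hb1⟩
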